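/- For a finite irreducible reversible lazy Markov chain and any a ∈ (0,1), the mixing and separation times satisfy t_mix(a) ≤ t_sep(a) ≤ 2·t_mix(a/4), where t_mix(a) := inf{t : d(t) ≤ a} and t_sep(a) := inf{t : d_sep(t) ≤ a}. -/
import Mathlib


open Finset

section aux

variable {Ω : Type*} [Fintype Ω] [Nonempty Ω] [DecidableEq Ω]
variable {P : Matrix Ω Ω ℝ} {π : Ω → ℝ}

lemma powNonneg (hP0 : ∀ x y, 0 ≤ P x y) : ∀ t x y, 0 ≤ (P ^ t) x y := by
  intro t
  induction t with
  | zero =>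
      intro x y
      simp only [pow_zero, Matrix.one_apply]
      split <;> norm_num
  | succ n ih =>
      intro x y
      rw [pow_succ, Matrix.mul_apply]
      exact Finset.sum_nonneg fun z _ => mul_nonneg (ih x z) (hP0 z y)

lemma powRowSum (hP1 : ∀ x, ∑ y, P x y = 1) : ∀ t x, ∑ y, (P ^ t) x y = 1 := by
  intro t
  induction t with
  | zero =>
      intro x
      simp [Matrix.one_apply]
  | succ n ih =>
      intro x
      simp only [pow_succ, Matrix.mul_apply]
      rw [Finset.sum_comm]
      have : ∀ z, ∑ y, (P ^ n) x z * P z y = (P ^ n) x z := by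
        intro z; rw [← Finset.mul_sum, hP1 z, mul_one]
      rw [Finset.sum_congr rfl fun z _ => this z, ih x]

lemma statOne (hP1 : ∀ x, ∑ y, P x y = 1) (hrev : ∀ x y, π x * P x y = π y * P y x) :
    ∀ y, ∑ x, π x * P x y = π y := by
  intro y
  calc ∑ x, π x * P x y = ∑ x, π y * P y x := Finset.sum_congr rfl fun x _ => hrev x y
    _ = π y * ∑ x, P y x := by rw [Finset.mul_sum]
    _ = π y := by rw [hP1 y, mul_one]

lemma statPow (hP1 : ∀ x, ∑ y, P x y = 1) (hπ1 : ∑ x, π x = 1)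
    (hrev : ∀ x y, π x * P x y = π y * P y x) :
    ∀ t y, ∑ x, π x * (P ^ t) x y = π y := by
  intro t
  induction t with
  | zero =>
      intro y
      simp [Matrix.one_apply]
  | succ n ih =>
      intro y
      simp only [pow_succ, Matrix.mul_apply, Finset.mul_sum]
      rw [Finset.sum_comm]
      calc ∑ z, ∑ x, π x * ((P ^ n) x z * P z y)
          = ∑ z, (∑ x, π x * (P ^ n) x z) * P z y := by
            refine Finset.sum_congr rfl fun z _ => ?_
            rw [Finset.sum_mul]
            exact Finset.sum_congr rfl fun x _ => by ring
        _ = ∑ z, π z * P z y := by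
            refine Finset.sum_congr rfl fun z _ => ?_
            rw [ih z]
        _ = π y := statOne hP1 hrev y

lemma revPow (hP1 : ∀ x, ∑ y, P x y = 1) (hπ1 : ∑ x, π x = 1)
    (hrev : ∀ x y, π x * P x y = π y * P y x) :
    ∀ t x y, π x * (P ^ t) x y = π y * (P ^ t) y x := by
  intro t
  induction t with
  | zero =>
      intro x y
      simp only [pow_zero, Matrix.one_apply]
      rcases eq_or_ne x y with h | h
      · subst h; simp
      · simp [h, Ne.symm h]
  | succ n ih =>
      intro x y
      have e1 : P ^ (n + 1) = P ^ n * P := pow_succ P n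
      have e2 : P ^ (n + 1) = P * P ^ n := pow_succ' P n
      conv_rhs => rw [e2]
      rw [e1]
      simp only [Matrix.mul_apply, Finset.mul_sum]
      refine Finset.sum_congr rfl fun z _ => ?_
      calc π x * ((P ^ n) x z * P z y) = (π x * (P ^ n) x z) * P z y := by ring
        _ = (π z * (P ^ n) z x) * P z y := by rw [ih x z]
        _ = (π z * P z y) * (P ^ n) z x := by ring
        _ = (π y * P y z) * (P ^ n) z x := by rw [hrev z y]
        _ = π y * (P y z * (P ^ n) z x) := by ring

/-- total variation distance is at most separation, pointwise in time. -/
lemma tv_le_sep (hP0 : ∀ x y, 0 ≤ P x y) (hP1 : ∀ x, ∑ y, P x y = 1)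
    (hπ0 : ∀ x, 0 < π x) (hπ1 : ∑ x, π x = 1) (t : ℕ) :
    (⨆ x, (1 / 2 : ℝ) * ∑ u, |(P ^ t) x u - π u|) ≤ 1 - (⨅ x, ⨅ y, (P ^ t) x y / π y) := by
  set I := ⨅ x, ⨅ y, (P ^ t) x y / π y with hI
  refine ciSup_le fun x => ?_
  have hIle : ∀ u, I ≤ (P ^ t) x u / π u := by
    intro u
    refine le_trans (ciInf_le (Finite.bddBelow_range _) x) ?_
    exact ciInf_le (Finite.bddBelow_range _) u
  -- I ≤ 1
  have hI1 : I ≤ 1 := by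
    by_contra h
    push_neg at h
    have hlt : ∀ u, π u < (P ^ t) x u := by
      intro u
      have := hIle u
      have h1 : (1 : ℝ) < (P ^ t) x u / π u := lt_of_lt_of_le h this
      rw [lt_div_iff₀ (hπ0 u)] at h1
      linarith
    have : (1 : ℝ) < 1 := by
      calc (1 : ℝ) = ∑ u, π u := hπ1.symm
        _ < ∑ u, (P ^ t) x u := Finset.sum_lt_sum_of_nonempty Finset.univ_nonempty fun u _ => hlt u
        _ = 1 := powRowSum hP1 t x
    linarith
  -- (1/2) ∑ |f| = ∑ max (-f) 0 where ∑ f = 0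
  have hsum0 : ∑ u, ((P ^ t) x u - π u) = 0 := by
    rw [Finset.sum_sub_distrib, powRowSum hP1 t x, hπ1, sub_self]
  have habs : ∀ u, |(P ^ t) x u - π u| =
      ((P ^ t) x u - π u) + 2 * max (π u - (P ^ t) x u) 0 := by
    intro u
    rcases le_total (π u) ((P ^ t) x u) with h | h
    · rw [abs_of_nonneg (by linarith), max_eq_right (by linarith)]; ring
    · rw [abs_of_nonpos (by linarith), max_eq_left (by linarith)]; ring
  have key : (1 / 2 : ℝ) * ∑ u, |(P ^ t) x u - π u| = ∑ u, max (π u - (P ^ t) x u) 0 := by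
    rw [Finset.sum_congr rfl fun u _ => habs u, Finset.sum_add_distrib, hsum0, zero_add,
      ← Finset.mul_sum]
    ring
  rw [key]
  calc ∑ u, max (π u - (P ^ t) x u) 0 ≤ ∑ u, (1 - I) * π u := by
        refine Finset.sum_le_sum fun u _ => ?_
        refine max_le ?_ ?_
        · have := hIle u
          rw [le_div_iff₀ (hπ0 u)] at this
          nlinarith [hπ0 u]
        · exact mul_nonneg (by linarith) (hπ0 u).le
    _ = 1 - I := by rw [← Finset.mul_sum, hπ1, mul_one]

/-- the halving trick: if d(t) ≤ a/4 then sep(2t) ≤ a. -/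
lemma sep_double (hP0 : ∀ x y, 0 ≤ P x y) (hP1 : ∀ x, ∑ y, P x y = 1)
    (hπ0 : ∀ x, 0 < π x) (hπ1 : ∑ x, π x = 1)
    (hrev : ∀ x y, π x * P x y = π y * P y x)
    {a : ℝ} (ha0 : 0 < a) (ha1 : a < 1) (t : ℕ)
    (hd : (⨆ x, (1 / 2 : ℝ) * ∑ u, |(P ^ t) x u - π u|) ≤ a / 4) :
    1 - (⨅ x, ⨅ y, (P ^ (2 * t)) x y / π y) ≤ a := by
  have hPt0 := powNonneg hP0 t
  have hdx : ∀ x, (1 / 2 : ℝ) * ∑ u, |(P ^ t) x u - π u| ≤ a / 4 := fun x =>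
    (le_ciSup (Finite.bddAbove_range _) x).trans hd
  have key : ∀ x y, 1 - a ≤ (P ^ (2 * t)) x y / π y := by
    intro x y
    set m : Ω → ℝ := fun z => min ((P ^ t) x z) ((P ^ t) y z) with hm
    have hm0 : ∀ z, 0 ≤ m z := fun z => le_min (hPt0 x z) (hPt0 y z)
    -- ∑ m ≥ 1 - a/2
    have hmsum : 1 - a / 2 ≤ ∑ z, m z := by
      have hmineq : ∀ z, m z =
          (((P ^ t) x z + (P ^ t) y z) - |(P ^ t) x z - (P ^ t) y z|) / 2 := by
        intro z
        rcases le_total ((P ^ t) x z) ((P ^ t) y z) with h | h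
        · rw [hm]; simp only
          rw [min_eq_left h, abs_of_nonpos (by linarith)]; ring
        · rw [hm]; simp only
          rw [min_eq_right h, abs_of_nonneg (by linarith)]; ring
      have habs : ∀ z, |(P ^ t) x z - (P ^ t) y z| ≤
          |(P ^ t) x z - π z| + |(P ^ t) y z - π z| := by
        intro z
        calc |(P ^ t) x z - (P ^ t) y z|
            = |((P ^ t) x z - π z) - ((P ^ t) y z - π z)| := by ring_nf
          _ ≤ |(P ^ t) x z - π z| + |(P ^ t) y z - π z| := abs_sub _ _
      have h1 : ∑ z, |(P ^ t) x z - π z| ≤ a / 2 := by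
        have := hdx x; linarith
      have h2 : ∑ z, |(P ^ t) y z - π z| ≤ a / 2 := by
        have := hdx y; linarith
      have hsum : ∑ z, |(P ^ t) x z - (P ^ t) y z| ≤ a := by
        calc ∑ z, |(P ^ t) x z - (P ^ t) y z|
            ≤ ∑ z, (|(P ^ t) x z - π z| + |(P ^ t) y z - π z|) :=
              Finset.sum_le_sum fun z _ => habs z
          _ = (∑ z, |(P ^ t) x z - π z|) + ∑ z, |(P ^ t) y z - π z| :=
              Finset.sum_add_distrib
          _ ≤ a := by linarith
      calc 1 - a / 2
          ≤ ((∑ z, (P ^ t) x z) + (∑ z, (P ^ t) y z)) / 2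
            - (∑ z, |(P ^ t) x z - (P ^ t) y z|) / 2 := by
            rw [powRowSum hP1 t x, powRowSum hP1 t y]; linarith
        _ = ∑ z, m z := by
            rw [Finset.sum_congr rfl fun z _ => hmineq z]
            rw [Finset.sum_div, Finset.sum_congr rfl fun z _ => sub_div _ _ (2:ℝ)]
            rw [Finset.sum_sub_distrib, ← Finset.sum_div, ← Finset.sum_div,
              Finset.sum_add_distrib]
    -- Cauchy–Schwarz
    have hCS : (∑ z, m z) ^ 2 ≤ ∑ z, (P ^ t) x z * (P ^ t) y z / π z := by
      have := Finset.sum_sq_le_sum_mul_sum_of_sq_eq_mul Finset.univ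
        (r := m) (f := fun z => m z ^ 2 / π z) (g := π)
        (fun z _ => div_nonneg (sq_nonneg _) (hπ0 z).le)
        (fun z _ => (hπ0 z).le)
        (fun z _ => by rw [div_mul_eq_mul_div, mul_div_assoc, div_self (hπ0 z).ne', mul_one])
      rw [hπ1, mul_one] at this
      refine this.trans (Finset.sum_le_sum fun z _ => ?_)
      have hnum : m z ^ 2 ≤ (P ^ t) x z * (P ^ t) y z := by
        have := hm0 z
        nlinarith [min_le_left ((P ^ t) x z) ((P ^ t) y z),
          min_le_right ((P ^ t) x z) ((P ^ t) y z)]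
      exact div_le_div_of_nonneg_right hnum (hπ0 z).le
    have heq : (P ^ (2 * t)) x y / π y = ∑ z, (P ^ t) x z * (P ^ t) y z / π z := by
      have h2t : (P ^ (2 * t)) x y = ∑ z, (P ^ t) x z * (P ^ t) z y := by
        rw [two_mul, pow_add, Matrix.mul_apply]
      rw [h2t, Finset.sum_div]
      refine Finset.sum_congr rfl fun z _ => ?_
      have hr := revPow hP1 hπ1 hrev t z y
      rw [div_eq_div_iff (hπ0 y).ne' (hπ0 z).ne']
      linear_combination (P ^ t) x z * hr
    have hsq : (1 - a / 2) ^ 2 ≤ (∑ z, m z) ^ 2 :=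
      pow_le_pow_left₀ (by linarith) hmsum 2
    rw [heq]
    nlinarith [hCS]
  have : 1 - a ≤ ⨅ x, ⨅ y, (P ^ (2 * t)) x y / π y :=
    le_ciInf fun x => le_ciInf fun y => key x y
  linarith


lemma exists_pos_pow (hP0 : ∀ x y, 0 ≤ P x y)
    (hirr : ∀ x y, ∃ t : ℕ, 0 < (P ^ t) x y)
    (hlazy : ∀ x, (1 : ℝ) / 2 ≤ P x x) :
    ∃ N : ℕ, ∀ x y, 0 < (P ^ N) x y := by
  have mono : ∀ s x y, 0 < (P ^ s) x y → 0 < (P ^ (s + 1)) x y := by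
    intro s x y h
    rw [pow_succ', Matrix.mul_apply]
    have hterm : 0 < P x x * (P ^ s) x y :=
      mul_pos (lt_of_lt_of_le (by norm_num) (hlazy x)) h
    refine lt_of_lt_of_le hterm ?_
    exact Finset.single_le_sum
      (fun z _ => mul_nonneg (hP0 x z) (powNonneg hP0 s z y)) (Finset.mem_univ x)
  have up : ∀ k s x y, 0 < (P ^ s) x y → 0 < (P ^ (s + k)) x y := by
    intro k
    induction k with
    | zero => intro s x y h; simpa using h
    | succ n ih =>
        intro s x y h
        have := ih s x y h
        rw [← Nat.add_assoc]
        exact mono _ x y this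
  choose t ht using hirr
  refine ⟨Finset.univ.sup (fun p : Ω × Ω => t p.1 p.2), fun x y => ?_⟩
  have hle : t x y ≤ Finset.univ.sup (fun p : Ω × Ω => t p.1 p.2) :=
    Finset.le_sup (f := fun p : Ω × Ω => t p.1 p.2) (Finset.mem_univ (x, y))
  have := up (Finset.univ.sup (fun p : Ω × Ω => t p.1 p.2) - t x y) (t x y) x y (ht x y)
  rwa [Nat.add_sub_cancel' hle] at this

lemma doeblin_iter (hP0 : ∀ x y, 0 ≤ P x y) (hP1 : ∀ x, ∑ y, P x y = 1)
    (hπ0 : ∀ x, 0 < π x) (hπ1 : ∑ x, π x = 1)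
    (hrev : ∀ x y, π x * P x y = π y * P y x)
    {N : ℕ} {ε : ℝ} (hε1 : ε ≤ 1) (hεN : ∀ x y, ε * π y ≤ (P ^ N) x y) :
    ∀ k x y, π y - (P ^ (k * N)) x y ≤ (1 - ε) ^ k * π y := by
  intro k
  induction k with
  | zero =>
      intro x y
      simp only [Nat.zero_mul, pow_zero, Matrix.one_apply, one_mul]
      split
      · linarith
      · linarith
  | succ k ih =>
      intro x y
      have hkN : (k + 1) * N = N + k * N := by ring
      have hrow := powRowSum hP1 N x
      have hsplit : π y - (P ^ ((k + 1) * N)) x y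
          = ∑ z, (P ^ N) x z * (π y - (P ^ (k * N)) z y) := by
        rw [hkN, pow_add, Matrix.mul_apply]
        rw [Finset.sum_congr rfl fun z _ => mul_sub ((P ^ N) x z) (π y) _]
        rw [Finset.sum_sub_distrib, ← Finset.sum_mul, hrow, one_mul]
      have hdecomp : ∑ z, (P ^ N) x z * (π y - (P ^ (k * N)) z y)
          = ε * (∑ z, π z * (π y - (P ^ (k * N)) z y))
            + ∑ z, ((P ^ N) x z - ε * π z) * (π y - (P ^ (k * N)) z y) := by
        rw [Finset.mul_sum, ← Finset.sum_add_distrib]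
        exact Finset.sum_congr rfl fun z _ => by ring
      have hfirst : ∑ z, π z * (π y - (P ^ (k * N)) z y) = 0 := by
        rw [Finset.sum_congr rfl fun z _ => mul_sub (π z) (π y) _]
        rw [Finset.sum_sub_distrib, ← Finset.sum_mul, hπ1, one_mul,
          statPow hP1 hπ1 hrev (k * N) y, sub_self]
      have hsecond : ∑ z, ((P ^ N) x z - ε * π z) * (π y - (P ^ (k * N)) z y)
          ≤ ∑ z, ((P ^ N) x z - ε * π z) * ((1 - ε) ^ k * π y) := by
        refine Finset.sum_le_sum fun z _ => ?_
        exact mul_le_mul_of_nonneg_left (ih z y) (by linarith [hεN x z])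
      have hlast : ∑ z, ((P ^ N) x z - ε * π z) * ((1 - ε) ^ k * π y)
          = (1 - ε) ^ (k + 1) * π y := by
        rw [← Finset.sum_mul, Finset.sum_sub_distrib, hrow, ← Finset.mul_sum, hπ1, mul_one,
          pow_succ]
        ring
      rw [hsplit, hdecomp, hfirst, mul_zero, zero_add]
      exact hsecond.trans_eq hlast

lemma sep_small (hP0 : ∀ x y, 0 ≤ P x y) (hP1 : ∀ x, ∑ y, P x y = 1)
    (hπ0 : ∀ x, 0 < π x) (hπ1 : ∑ x, π x = 1)
    (hrev : ∀ x y, π x * P x y = π y * P y x)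
    (hirr : ∀ x y, ∃ t : ℕ, 0 < (P ^ t) x y)
    (hlazy : ∀ x, (1 : ℝ) / 2 ≤ P x x)
    {b : ℝ} (hb : 0 < b) :
    ∃ s : ℕ, 1 - (⨅ x, ⨅ y, (P ^ s) x y / π y) ≤ b := by
  obtain ⟨N, hN⟩ := exists_pos_pow hP0 hirr hlazy
  have hune : (Finset.univ : Finset (Ω × Ω)).Nonempty := Finset.univ_nonempty
  set ε : ℝ := Finset.inf' Finset.univ hune (fun p : Ω × Ω => (P ^ N) p.1 p.2 / π p.2) with hε
  have hε0 : 0 < ε := by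
    rw [hε, Finset.lt_inf'_iff]
    exact fun p _ => div_pos (hN p.1 p.2) (hπ0 p.2)
  have hεle : ∀ x y, ε * π y ≤ (P ^ N) x y := by
    intro x y
    have := Finset.inf'_le (fun p : Ω × Ω => (P ^ N) p.1 p.2 / π p.2) (Finset.mem_univ (x, y))
    rw [← hε] at this
    calc ε * π y ≤ (P ^ N) x y / π y * π y := by
          exact mul_le_mul_of_nonneg_right this (hπ0 y).le
      _ = (P ^ N) x y := div_mul_cancel₀ _ (hπ0 y).ne'
  have hε1 : ε ≤ 1 := by
    obtain ⟨x0⟩ := ‹Nonempty Ω›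
    have h1 : ε * 1 = ∑ y, ε * π y := by rw [← Finset.mul_sum, hπ1]
    have h2 : ∑ y, ε * π y ≤ ∑ y, (P ^ N) x0 y := Finset.sum_le_sum fun y _ => hεle x0 y
    have h3 := powRowSum hP1 N x0
    linarith
  obtain ⟨k, hk⟩ := exists_pow_lt_of_lt_one hb (by linarith : 1 - ε < 1)
  refine ⟨k * N, ?_⟩
  have hinf : 1 - b ≤ ⨅ x, ⨅ y, (P ^ (k * N)) x y / π y := by
    refine le_ciInf fun x => le_ciInf fun y => ?_
    have hit := doeblin_iter hP0 hP1 hπ0 hπ1 hrev hε1 hεle k x y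
    rw [le_div_iff₀ (hπ0 y)]
    have hmul : (1 - ε) ^ k * π y < b * π y := mul_lt_mul_of_pos_right hk (hπ0 y)
    nlinarith
  linarith

end aux

/-- For a finite irreducible reversible lazy Markov chain and any
`a ∈ (0,1)`: `t_mix(a) ≤ t_sep(a) ≤ 2·t_mix(a/4)`, where
`t_mix(a) = inf{t : d(t) ≤ a}` and `t_sep(a) = inf{t : d_sep(t) ≤ a}`. -/
theorem stmt9 {Ω : Type*} [Fintype Ω] [Nonempty Ω] [DecidableEq Ω]
    (P : Matrix Ω Ω ℝ) (π : Ω → ℝ)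
    (hP0 : ∀ x y, 0 ≤ P x y) (hP1 : ∀ x, ∑ y, P x y = 1)
    (hπ0 : ∀ x, 0 < π x) (hπ1 : ∑ x, π x = 1)
    (hrev : ∀ x y, π x * P x y = π y * P y x)
    (hirr : ∀ x y, ∃ t : ℕ, 0 < (P ^ t) x y)
    (hlazy : ∀ x, (1 : ℝ) / 2 ≤ P x x)
    (a : ℝ) (ha0 : 0 < a) (ha1 : a < 1) :
    sInf {s : ℕ | (⨆ x, (1 / 2) * ∑ u, |(P ^ s) x u - π u|) ≤ a} ≤
        sInf {s : ℕ | 1 - (⨅ x, ⨅ y, (P ^ s) x y / π y) ≤ a}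
      ∧
    sInf {s : ℕ | 1 - (⨅ x, ⨅ y, (P ^ s) x y / π y) ≤ a} ≤
        2 * sInf {s : ℕ | (⨆ x, (1 / 2) * ∑ u, |(P ^ s) x u - π u|) ≤ a / 4} := by
  obtain ⟨s4, hs4⟩ := sep_small hP0 hP1 hπ0 hπ1 hrev hirr hlazy (b := a / 4) (by linarith)
  have hs4' : (⨆ x, (1 / 2 : ℝ) * ∑ u, |(P ^ s4) x u - π u|) ≤ a / 4 :=
    (tv_le_sep hP0 hP1 hπ0 hπ1 s4).trans hs4
  obtain ⟨sa, hsa⟩ := sep_small hP0 hP1 hπ0 hπ1 hrev hirr hlazy (b := a) ha0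
  constructor
  · have hmem : sInf {s : ℕ | 1 - (⨅ x, ⨅ y, (P ^ s) x y / π y) ≤ a}
        ∈ {s : ℕ | 1 - (⨅ x, ⨅ y, (P ^ s) x y / π y) ≤ a} := Nat.sInf_mem ⟨sa, hsa⟩
    exact Nat.sInf_le ((tv_le_sep hP0 hP1 hπ0 hπ1 _).trans hmem)
  · set m := sInf {s : ℕ | (⨆ x, (1 / 2 : ℝ) * ∑ u, |(P ^ s) x u - π u|) ≤ a / 4} with hm
    have hmem : m ∈ {s : ℕ | (⨆ x, (1 / 2 : ℝ) * ∑ u, |(P ^ s) x u - π u|) ≤ a / 4} :=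
      Nat.sInf_mem ⟨s4, hs4'⟩
    exact Nat.sInf_le (sep_double hP0 hP1 hπ0 hπ1 hrev ha0 ha1 m hmem)
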